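/- Let X be a topological space and let g : X → ℝ be a first Baire class function. Then there exists a separately continuous function f : X × X → ℝ (with respect to the product topology on X × X) such that g is the diagonal of f, i.e. f(x, x) = g(x) for every x ∈ X. -/

import Mathlib

open Set Filter Topology TopologicalSpace

/-- A subset `A` of a topological space is functionally closed if it is the
zero set of a continuous real-valued function. -/
def FunctionallyClosed {X : Type*} [TopologicalSpace X] (A : Set X) : Prop :=
  ∃ g : X → ℝ, Continuous g ∧ A = g ⁻¹' {0}

/-- `A` is a countable union of functionally closed subsets. -/
def CountableUnionOfFunctionallyClosed {X : Type*} [TopologicalSpace X] (A : Set X) : Prop :=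
  ∃ F : ℕ → Set X, (∀ n, FunctionallyClosed (F n)) ∧ A = ⋃ n, F n

/-- `f : X → ℝ` is a first Baire class function: a pointwise limit of a
sequence of continuous functions. -/
def BaireOne {X : Type*} [TopologicalSpace X] (f : X → ℝ) : Prop :=
  ∃ g : ℕ → X → ℝ, (∀ n, Continuous (g n)) ∧
    ∀ x, Tendsto (fun n => g n x) atTop (𝓝 (f x))

/-! ### The kernel function -/

noncomputable def phiK (s t : ℝ) : ℝ :=
  if s = 0 ∨ t = 0 then 1 else (s - t) ^ 2 / (s ^ 2 + t ^ 2)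

lemma phiK_nonneg (s t : ℝ) : 0 ≤ phiK s t := by
  unfold phiK
  split
  · norm_num
  · positivity

lemma phiK_le_one {s t : ℝ} (hs : 0 ≤ s) (ht : 0 ≤ t) : phiK s t ≤ 1 := by
  unfold phiK
  split
  · exact le_refl 1
  · rename_i hst
    push_neg at hst
    have h2 : 0 < s ^ 2 := by
      rcases lt_or_gt_of_ne hst.1 with h | h <;> nlinarith
    have h1 : 0 < s ^ 2 + t ^ 2 := by nlinarith
    rw [div_le_one h1]
    nlinarith [mul_nonneg hs ht]

lemma phiK_self {s : ℝ} (hs : s ≠ 0) : phiK s s = 0 := by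
  simp [phiK, hs]

lemma phiK_zero_left (t : ℝ) : phiK 0 t = 1 := by simp [phiK]

lemma phiK_zero_right (s : ℝ) : phiK s 0 = 1 := by simp [phiK]

lemma phiK_cont_left (t : ℝ) : Continuous fun s => phiK s t := by
  rcases eq_or_ne t 0 with rfl | ht
  · simpa [phiK] using continuous_const
  · have key : (fun s => phiK s t) = fun s => (s - t) ^ 2 / (s ^ 2 + t ^ 2) := by
      funext s
      rcases eq_or_ne s 0 with rfl | hs
      · have h1 : (0:ℝ) - t = -t := by ring
        simp [phiK, ht, h1, neg_pow]
      · simp [phiK, hs, ht]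
    rw [key]
    apply Continuous.div
    · fun_prop
    · fun_prop
    · intro s
      positivity

lemma phiK_comm (s t : ℝ) : phiK s t = phiK t s := by
  rcases eq_or_ne s 0 with rfl | hs
  · simp [phiK]
  · rcases eq_or_ne t 0 with rfl | ht
    · simp [phiK]
    · simp only [phiK, hs, ht, or_false, false_or, if_neg hs, if_neg ht]
      rw [if_neg (by tauto), if_neg (by tauto)]
      rw [show (s - t) ^ 2 = (t - s) ^ 2 by ring, add_comm (s ^ 2)]

lemma phiK_cont_right (s : ℝ) : Continuous fun t => phiK s t := by
  simp only [fun t => phiK_comm s t]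
  exact phiK_cont_left s

/-! ### Running-maximum kernels and the interpolation sums -/

noncomputable def PhiA {X : Type*} (u : ℕ → X → ℝ) : ℕ → X → X → ℝ
  | 0 => fun _ _ => 0
  | (k+1) => fun x y => max (PhiA u k x y) (phiK (u k x) (u k y))

section PhiA

variable {X : Type*} {u : ℕ → X → ℝ}

lemma PhiA_nonneg (k : ℕ) (x y : X) : 0 ≤ PhiA u k x y := by
  induction k with
  | zero => exact le_refl 0
  | succ k ih => exact le_trans ih (le_max_left _ _)

lemma PhiA_le_one (hu0 : ∀ k x, 0 ≤ u k x) (k : ℕ) (x y : X) : PhiA u k x y ≤ 1 := by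
  induction k with
  | zero => norm_num [PhiA]
  | succ k ih => exact max_le ih (phiK_le_one (hu0 k x) (hu0 k y))

lemma PhiA_mono (k : ℕ) (x y : X) : PhiA u k x y ≤ PhiA u (k+1) x y :=
  le_max_left _ _

lemma PhiA_eq_one (hu0 : ∀ k x, 0 ≤ u k x) {k : ℕ} {x y : X}
    (h : ∃ j, j < k ∧ (u j x = 0 ∨ u j y = 0)) : PhiA u k x y = 1 := by
  induction k with
  | zero => obtain ⟨j, hj, _⟩ := h; omega
  | succ k ih =>
    obtain ⟨j, hj, hz⟩ := h
    rcases Nat.lt_succ_iff_lt_or_eq.mp hj with hj' | rfl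
    · have h1 : PhiA u k x y = 1 := ih ⟨j, hj', hz⟩
      show max (PhiA u k x y) _ = 1
      rw [h1]
      exact max_eq_left (phiK_le_one (hu0 k x) (hu0 k y))
    · have h1 : phiK (u j x) (u j y) = 1 := by
        rcases hz with hz | hz
        · rw [hz]; exact phiK_zero_left _
        · rw [hz]; exact phiK_zero_right _
      show max (PhiA u j x y) _ = 1
      rw [h1]
      exact max_eq_right (PhiA_le_one hu0 j x y)

lemma PhiA_diag_zero {k : ℕ} {x : X} (h : ∀ j, j < k → u j x ≠ 0) :
    PhiA u k x x = 0 := by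
  induction k with
  | zero => rfl
  | succ k ih =>
    show max (PhiA u k x x) (phiK (u k x) (u k x)) = 0
    rw [ih (fun j hj => h j (Nat.lt_succ_of_lt hj)), phiK_self (h k (Nat.lt_succ_self k))]
    exact max_self 0

variable [TopologicalSpace X]

lemma PhiA_cont_left (hu : ∀ k, Continuous (u k)) (k : ℕ) (y : X) :
    Continuous fun x => PhiA u k x y := by
  induction k with
  | zero => exact continuous_const
  | succ k ih =>
    exact ih.max ((phiK_cont_left (u k y)).comp (hu k))

lemma PhiA_cont_right (hu : ∀ k, Continuous (u k)) (k : ℕ) (x : X) :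
    Continuous fun y => PhiA u k x y := by
  induction k with
  | zero => exact continuous_const
  | succ k ih =>
    exact ih.max ((phiK_cont_right (u k x)).comp (hu k))

end PhiA

noncomputable def FFa {X : Type*} (u φ : ℕ → X → ℝ) (K : ℕ) (x y : X) : ℝ :=
  (∑ k ∈ Finset.range K, (PhiA u (k+1) x y - PhiA u k x y) * φ k x)
    + (1 - PhiA u K x y) * φ K x

section FFa

variable {X : Type*} {u φ : ℕ → X → ℝ}

lemma FFa_succ (K : ℕ) (x y : X) :
    FFa u φ (K+1) x y
      = FFa u φ K x y + (1 - PhiA u (K+1) x y) * (φ (K+1) x - φ K x) := by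
  unfold FFa
  rw [Finset.sum_range_succ]
  ring

lemma FFa_stab (hu0 : ∀ k x, 0 ≤ u k x) {K : ℕ} {x y : X}
    (hz : ∃ j, j ≤ K ∧ (u j x = 0 ∨ u j y = 0)) :
    ∀ L, K ≤ L → FFa u φ L x y = FFa u φ K x y := by
  obtain ⟨j, hj, hzj⟩ := hz
  intro L hL
  induction L, hL using Nat.le_induction with
  | base => rfl
  | succ L hKL ih =>
    rw [FFa_succ, ih]
    have h1 : PhiA u (L+1) x y = 1 :=
      PhiA_eq_one hu0 ⟨j, by omega, hzj⟩
    rw [h1]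
    ring

variable [TopologicalSpace X]

lemma FFa_cont_left (hu : ∀ k, Continuous (u k)) (hφ : ∀ k, Continuous (φ k))
    (K : ℕ) (y : X) : Continuous fun x => FFa u φ K x y := by
  apply Continuous.add
  · apply continuous_finset_sum
    intro k _
    exact ((PhiA_cont_left hu (k+1) y).sub (PhiA_cont_left hu k y)).mul (hφ k)
  · exact (continuous_const.sub (PhiA_cont_left hu K y)).mul (hφ K)

lemma FFa_cont_right (hu : ∀ k, Continuous (u k)) (K : ℕ) (x : X) :
    Continuous fun y => FFa u φ K x y := by
  apply Continuous.add
  · apply continuous_finset_sum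
    intro k _
    exact (((PhiA_cont_right hu (k+1) x).sub (PhiA_cont_right hu k x)).mul continuous_const)
  · exact ((continuous_const.sub (PhiA_cont_right hu K x)).mul continuous_const)

lemma FFa_diag {x : X} {K : ℕ} (h : ∀ j, j < K → u j x ≠ 0) :
    FFa u φ K x x = φ K x := by
  unfold FFa
  have hz : ∀ k, k ≤ K → PhiA u k x x = 0 := fun k hk =>
    PhiA_diag_zero (fun j hj => h j (by omega))
  rw [Finset.sum_eq_zero, hz K (le_refl K)]
  · ring
  · intro k hk
    rw [Finset.mem_range] at hk
    rw [hz k (by omega), hz (k+1) (by omega)]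
    ring

lemma FFa_bound (hu0 : ∀ k x, 0 ≤ u k x) {c : ℝ} (hc : ∀ k x, |φ k x| ≤ c)
    (K : ℕ) (x y : X) : |FFa u φ K x y| ≤ c := by
  have key : ∀ k, |(PhiA u (k+1) x y - PhiA u k x y) * φ k x|
      ≤ (PhiA u (k+1) x y - PhiA u k x y) * c := by
    intro k
    rw [abs_mul, abs_of_nonneg (sub_nonneg.mpr (PhiA_mono k x y))]
    exact mul_le_mul_of_nonneg_left (hc k x) (sub_nonneg.mpr (PhiA_mono k x y))
  calc |FFa u φ K x y|
      ≤ |∑ k ∈ Finset.range K, (PhiA u (k+1) x y - PhiA u k x y) * φ k x|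
        + |(1 - PhiA u K x y) * φ K x| := abs_add_le _ _
    _ ≤ (∑ k ∈ Finset.range K, (PhiA u (k+1) x y - PhiA u k x y) * c)
        + (1 - PhiA u K x y) * c := by
        apply add_le_add
        · exact le_trans (Finset.abs_sum_le_sum_abs _ _)
            (Finset.sum_le_sum (fun k _ => key k))
        · rw [abs_mul, abs_of_nonneg (sub_nonneg.mpr (PhiA_le_one hu0 K x y))]
          exact mul_le_mul_of_nonneg_left (hc K x)
            (sub_nonneg.mpr (PhiA_le_one hu0 K x y))
    _ = c := by
        have ht : ∀ k, (PhiA u (k+1) x y - PhiA u k x y) * c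
            = PhiA u (k+1) x y * c - PhiA u k x y * c := fun k => by ring
        simp only [ht]
        rw [Finset.sum_range_sub (fun k => PhiA u k x y * c)]
        show PhiA u K x y * c - PhiA u 0 x y * c + (1 - PhiA u K x y) * c = c
        show PhiA u K x y * c - (0:ℝ) * c + (1 - PhiA u K x y) * c = c
        ring

end FFa

/-! ### The key lemma: exact diagonals of patchwork functions -/

theorem key_lemma {X : Type*} [TopologicalSpace X] (u φ : ℕ → X → ℝ)
    (hu : ∀ k, Continuous (u k)) (hu0 : ∀ k x, 0 ≤ u k x)
    (nn : X → ℕ) (hnn : ∀ x, u (nn x) x = 0)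
    (hmin : ∀ x j, j < nn x → u j x ≠ 0)
    (hφ : ∀ k, Continuous (φ k)) :
    ∃ f : X × X → ℝ,
      (∀ y, Continuous fun x => f (x, y)) ∧
      (∀ x, Continuous fun y => f (x, y)) ∧
      (∀ x, f (x, x) = φ (nn x) x) ∧
      (∀ c : ℝ, (∀ k x, |φ k x| ≤ c) → ∀ p, |f p| ≤ c) := by
  have stab : ∀ x y K, min (nn x) (nn y) ≤ K →
      FFa u φ K x y = FFa u φ (min (nn x) (nn y)) x y := by
    intro x y K hK
    apply FFa_stab hu0 _ K hK
    rcases min_cases (nn x) (nn y) with ⟨hm, _⟩ | ⟨hm, _⟩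
    · exact ⟨min (nn x) (nn y), le_refl _, Or.inl (by rw [hm]; exact hnn x)⟩
    · exact ⟨min (nn x) (nn y), le_refl _, Or.inr (by rw [hm]; exact hnn y)⟩
  refine ⟨fun p => FFa u φ (min (nn p.1) (nn p.2)) p.1 p.2, ?_, ?_, ?_, ?_⟩
  · intro y
    have he : (fun x => FFa u φ (min (nn x) (nn y)) x y)
        = fun x => FFa u φ (nn y) x y := by
      funext x
      exact (stab x y (nn y) (min_le_right _ _)).symm
    show Continuous fun x => FFa u φ (min (nn x) (nn y)) x y
    rw [he]
    exact FFa_cont_left hu hφ (nn y) y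
  · intro x
    have he : (fun y => FFa u φ (min (nn x) (nn y)) x y)
        = fun y => FFa u φ (nn x) x y := by
      funext y
      exact (stab x y (nn x) (min_le_left _ _)).symm
    show Continuous fun y => FFa u φ (min (nn x) (nn y)) x y
    rw [he]
    exact FFa_cont_right hu (nn x) x
  · intro x
    show FFa u φ (min (nn x) (nn x)) x x = φ (nn x) x
    rw [min_self]
    exact FFa_diag (fun j hj => hmin x j hj)
  · intro c hc p
    exact FFa_bound hu0 hc _ _ _

/-! ### Cauchy-control functions -/

noncomputable def ucal {X : Type*} (h : ℕ → X → ℝ) (m k : ℕ) (x : X) : ℝ :=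
  ∑' i : ℕ, (1/2:ℝ)^i * min 1 (max 0 (|h (k+i) x - h k x| - (1/2)^m))

section ucal

variable {X : Type*} {h : ℕ → X → ℝ}

lemma ucal_term_nonneg (m k : ℕ) (x : X) (i : ℕ) :
    0 ≤ (1/2:ℝ)^i * min 1 (max 0 (|h (k+i) x - h k x| - (1/2)^m)) := by
  apply mul_nonneg (by positivity)
  exact le_min (by norm_num) (le_max_left _ _)

lemma ucal_term_le (m k : ℕ) (x : X) (i : ℕ) :
    (1/2:ℝ)^i * min 1 (max 0 (|h (k+i) x - h k x| - (1/2)^m)) ≤ (1/2:ℝ)^i := by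
  nth_rewrite 2 [show ((1:ℝ)/2)^i = (1/2:ℝ)^i * 1 by ring]
  exact mul_le_mul_of_nonneg_left (min_le_left _ _) (by positivity)

lemma ucal_summable (m k : ℕ) (x : X) :
    Summable (fun i : ℕ => (1/2:ℝ)^i * min 1 (max 0 (|h (k+i) x - h k x| - (1/2)^m))) :=
  Summable.of_nonneg_of_le (ucal_term_nonneg m k x) (ucal_term_le m k x)
    summable_geometric_two

lemma ucal_nonneg (m k : ℕ) (x : X) : 0 ≤ ucal h m k x :=
  tsum_nonneg (ucal_term_nonneg m k x)

lemma ucal_eq_zero_iff (m k : ℕ) (x : X) :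
    ucal h m k x = 0 ↔ ∀ i, |h (k+i) x - h k x| ≤ (1/2:ℝ)^m := by
  constructor
  · intro h0 i
    by_contra hlt
    push_neg at hlt
    have hterm : 0 < (1/2:ℝ)^i * min 1 (max 0 (|h (k+i) x - h k x| - (1/2)^m)) := by
      apply mul_pos (by positivity)
      exact lt_min one_pos (lt_of_lt_of_le (sub_pos.mpr hlt) (le_max_right _ _))
    have hle := Summable.le_tsum (ucal_summable (h := h) m k x) i
      (fun j _ => ucal_term_nonneg (h := h) m k x j)
    rw [show ∑' (i : ℕ), (1/2:ℝ)^i * min 1 (max 0 (|h (k+i) x - h k x| - (1/2)^m))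
      = ucal h m k x from rfl, h0] at hle
    linarith
  · intro hb
    have hz : ∀ i : ℕ, (1/2:ℝ)^i * min 1 (max 0 (|h (k+i) x - h k x| - (1/2)^m)) = 0 := by
      intro i
      have : max 0 (|h (k+i) x - h k x| - (1/2)^m) = 0 :=
        max_eq_left (sub_nonpos.mpr (hb i))
      rw [this]
      simp
    unfold ucal
    rw [tsum_congr hz]
    exact tsum_zero

lemma ucal_anti {m k : ℕ} {x : X} (h0 : ucal h (m+1) k x = 0) : ucal h m k x = 0 := by
  rw [ucal_eq_zero_iff] at h0 ⊢
  intro i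
  exact le_trans (h0 i) (by apply pow_le_pow_of_le_one <;> norm_num)

variable [TopologicalSpace X]

lemma ucal_cont (hh : ∀ n, Continuous (h n)) (m k : ℕ) : Continuous (ucal h m k) := by
  apply continuous_tsum (u := fun i : ℕ => (1/2:ℝ)^i)
  · intro i
    apply Continuous.mul continuous_const
    exact (continuous_const.min ((continuous_const.max
      ((((hh (k+i)).sub (hh k)).abs).sub continuous_const))))
  · exact summable_geometric_two
  · intro i x
    rw [Real.norm_eq_abs, abs_of_nonneg (ucal_term_nonneg m k x i)]
    exact ucal_term_le m k x i

end ucal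

/-! ### An explicit pairing enumeration of ℕ × ℕ -/

def prN (i : ℕ) : ℕ × ℕ :=
  if i - Nat.sqrt i * Nat.sqrt i ≤ Nat.sqrt i
  then (i - Nat.sqrt i * Nat.sqrt i, Nat.sqrt i)
  else (Nat.sqrt i, i - Nat.sqrt i * Nat.sqrt i - Nat.sqrt i - 1)

lemma prN_eq (j k : ℕ) (hjk : j ≤ k) : prN (k*k + j) = (j, k) := by
  have hs : Nat.sqrt (k*k + j) = k := by
    have h1 : k ≤ Nat.sqrt (k*k + j) := Nat.le_sqrt.mpr (Nat.le_add_right _ _)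
    have h2 : Nat.sqrt (k*k + j) < k + 1 := Nat.sqrt_lt.mpr (by nlinarith)
    omega
  unfold prN
  rw [hs]
  rw [if_pos (by omega)]
  simp [show k*k + j - k*k = j from by omega]

lemma prN_lt {i j k : ℕ} (hjk : j ≤ k) (hi : i < k*k + j) :
    (prN i).1 < j ∨ (prN i).2 < k := by
  have hM1 : Nat.sqrt i * Nat.sqrt i ≤ i := Nat.sqrt_le i
  have hM2 : i < (Nat.sqrt i + 1) * (Nat.sqrt i + 1) := Nat.lt_succ_sqrt i
  by_cases hc : i < k*k
  · right
    have hMk : Nat.sqrt i < k := Nat.sqrt_lt.mpr hc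
    have h2' : i < Nat.sqrt i * Nat.sqrt i + 2 * Nat.sqrt i + 1 := by nlinarith
    unfold prN
    split <;> simp <;> omega
  · left
    push_neg at hc
    have hMk : Nat.sqrt i = k := by
      have h1 : k ≤ Nat.sqrt i := Nat.le_sqrt.mpr hc
      have h2 : Nat.sqrt i < k + 1 := Nat.sqrt_lt.mpr (by nlinarith)
      omega
    unfold prN
    rw [hMk, if_pos (by omega)]
    simp
    omega

/-! ### The main theorem -/

theorem baire_one_is_diagonal_of_separately_continuous
    {X : Type*} [TopologicalSpace X] (g : X → ℝ) (hg : BaireOne g) :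
    ∃ f : X × X → ℝ,
      (∀ x₂ : X, ContinuousOn f {p : X × X | p.2 = x₂}) ∧
      (∀ x₁ : X, ContinuousOn f {p : X × X | p.1 = x₁}) ∧
      ∀ x : X, f (x, x) = g x := by
  obtain ⟨h, hh, htend⟩ := hg
  have exu : ∀ (m : ℕ) (x : X), ∃ k, ucal h m k x = 0 := by
    intro m x
    have hpos : (0:ℝ) < (1/2:ℝ)^m / 2 := by positivity
    obtain ⟨N, hN⟩ := (Metric.tendsto_atTop.mp (htend x)) ((1/2)^m / 2) hpos
    refine ⟨N, (ucal_eq_zero_iff m N x).mpr ?_⟩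
    intro i
    have h1 := hN (N+i) (by omega)
    have h2 := hN N (le_refl N)
    rw [Real.dist_eq] at h1 h2
    have h3 := abs_sub_le (h (N+i) x) (g x) (h N x)
    rw [abs_sub_comm (g x) (h N x)] at h3
    linarith
  set n : ℕ → X → ℕ := fun m x => Nat.find (exu m x) with hn
  have hn0 : ∀ m x, ucal h m (n m x) x = 0 := fun m x => Nat.find_spec (exu m x)
  have hnmin : ∀ m x j, j < n m x → ucal h m j x ≠ 0 :=
    fun m x j hj => Nat.find_min (exu m x) hj
  have hnmono : ∀ m x, n m x ≤ n (m+1) x := fun m x =>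
    Nat.find_mono (fun k hk => ucal_anti hk)
  have hng : ∀ m x, |h (n m x) x - g x| ≤ (1/2:ℝ)^m := by
    intro m x
    have hb := (ucal_eq_zero_iff m (n m x) x).mp (hn0 m x)
    have h1 : Tendsto (fun i : ℕ => h (n m x + i) x) atTop (𝓝 (g x)) := by
      have h2 := (htend x).comp (tendsto_add_atTop_nat (n m x))
      have h3 : ((fun k => h k x) ∘ fun i => i + n m x) = fun i : ℕ => h (n m x + i) x := by
        funext i
        simp [add_comm]
      rwa [h3] at h2
    have hlim : Tendsto (fun i : ℕ => |h (n m x + i) x - h (n m x) x|) atTop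
        (𝓝 (|g x - h (n m x) x|)) := (h1.sub tendsto_const_nhds).abs
    have h4 := le_of_tendsto hlim (Eventually.of_forall hb)
    rwa [abs_sub_comm] at h4
  obtain ⟨f0, hf01, hf02, hf03, _⟩ := key_lemma (ucal h 0) h (ucal_cont hh 0)
    (fun k x => ucal_nonneg 0 k x) (n 0) (hn0 0) (hnmin 0) hh
  have stage : ∀ m : ℕ, ∃ fm : X × X → ℝ,
      (∀ y, Continuous fun x => fm (x, y)) ∧
      (∀ x, Continuous fun y => fm (x, y)) ∧
      (∀ x, fm (x, x) = h (n (m+1) x) x - h (n m x) x) ∧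
      (∀ p, |fm p| ≤ (1/2:ℝ)^m + (1/2:ℝ)^(m+1)) := by
    intro m
    set c : ℝ := (1/2:ℝ)^m + (1/2:ℝ)^(m+1) with hcdef
    have hc0 : (0:ℝ) ≤ c := by positivity
    set uu : ℕ → X → ℝ := fun i x => ucal h m (prN i).1 x + ucal h (m+1) (prN i).2 x
      with huu
    set ff : ℕ → X → ℝ := fun i x => max (-c) (min c (h (prN i).2 x - h (prN i).1 x))
      with hff
    set NN : X → ℕ := fun x => (n (m+1) x) * (n (m+1) x) + n m x with hNN
    have hu : ∀ i, Continuous (uu i) := fun i =>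
      (ucal_cont hh m _).add (ucal_cont hh (m+1) _)
    have hu0 : ∀ i x, 0 ≤ uu i x := fun i x =>
      add_nonneg (ucal_nonneg _ _ _) (ucal_nonneg _ _ _)
    have hprNN : ∀ x : X, prN (NN x) = (n m x, n (m+1) x) := by
      intro x
      rw [hNN]
      exact prN_eq (n m x) (n (m+1) x) (hnmono m x)
    have hNz : ∀ x, uu (NN x) x = 0 := by
      intro x
      show ucal h m (prN (NN x)).1 x + ucal h (m+1) (prN (NN x)).2 x = 0
      rw [hprNN x]
      show ucal h m (n m x) x + ucal h (m+1) (n (m+1) x) x = 0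
      rw [hn0 m x, hn0 (m+1) x, add_zero]
    have hNmin : ∀ x j, j < NN x → uu j x ≠ 0 := by
      intro x j hj hzero
      have hsum := (add_eq_zero_iff_of_nonneg (ucal_nonneg _ _ _)
        (ucal_nonneg _ _ _)).mp hzero
      rcases prN_lt (hnmono m x) hj with hlt | hlt
      · exact hnmin m x _ hlt hsum.1
      · exact hnmin (m+1) x _ hlt hsum.2
    have hφc : ∀ i, Continuous (ff i) := fun i =>
      continuous_const.max (continuous_const.min ((hh _).sub (hh _)))
    obtain ⟨fm, h1, h2, h3, h4⟩ := key_lemma uu ff hu hu0 NN hNz hNmin hφc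
    refine ⟨fm, h1, h2, ?_, ?_⟩
    · intro x
      rw [h3 x]
      show max (-c) (min c (h (prN (NN x)).2 x - h (prN (NN x)).1 x)) = _
      rw [hprNN x]
      show max (-c) (min c (h (n (m+1) x) x - h (n m x) x)) = _
      have hb : |h (n (m+1) x) x - h (n m x) x| ≤ c := by
        have ht := abs_sub_le (h (n (m+1) x) x) (g x) (h (n m x) x)
        rw [abs_sub_comm (g x) (h (n m x) x)] at ht
        have e1 := hng (m+1) x
        have e2 := hng m x
        rw [hcdef]
        linarith
      rw [abs_le] at hb
      rw [min_eq_right hb.2, max_eq_right hb.1]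
    · intro p
      apply h4 c
      intro k x
      rw [abs_le]
      constructor
      · exact le_trans (neg_le_neg (le_refl c)) (le_max_left _ _)
      · exact max_le (by linarith) (min_le_left _ _)
  choose fΔ hΔ1 hΔ2 hΔ3 hΔ4 using stage
  have csum : Summable (fun m : ℕ => (1/2:ℝ)^m + (1/2:ℝ)^(m+1)) := by
    apply Summable.add summable_geometric_two
    have := summable_geometric_two.mul_right (1/2:ℝ)
    simpa [pow_succ] using this
  refine ⟨fun p => f0 p + ∑' m, fΔ m p, ?_, ?_, ?_⟩
  · intro x2
    rw [continuousOn_iff_continuous_restrict]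
    have hF : Continuous fun x : X => f0 (x, x2) + ∑' m, fΔ m (x, x2) := by
      apply (hf01 x2).add
      apply continuous_tsum (fun m => hΔ1 m x2) csum
      intro m x
      rw [Real.norm_eq_abs]
      exact hΔ4 m (x, x2)
    have he : domRestrict {p : X × X | p.2 = x2} (fun p => f0 p + ∑' m, fΔ m p)
        = (fun x : X => f0 (x, x2) + ∑' m, fΔ m (x, x2)) ∘ (fun q => q.val.1) := by
      funext q
      have hq : q.val = (q.val.1, x2) := by
        have hq2 := q.prop
        simp only [mem_setOf_eq] at hq2
        exact Prod.ext rfl hq2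
      simp only [domRestrict, Function.comp_apply]
      rw [hq]
    rw [he]
    exact hF.comp (continuous_fst.comp continuous_subtype_val)
  · intro x1
    rw [continuousOn_iff_continuous_restrict]
    have hF : Continuous fun y : X => f0 (x1, y) + ∑' m, fΔ m (x1, y) := by
      apply (hf02 x1).add
      apply continuous_tsum (fun m => hΔ2 m x1) csum
      intro m y
      rw [Real.norm_eq_abs]
      exact hΔ4 m (x1, y)
    have he : domRestrict {p : X × X | p.1 = x1} (fun p => f0 p + ∑' m, fΔ m p)
        = (fun y : X => f0 (x1, y) + ∑' m, fΔ m (x1, y)) ∘ (fun q => q.val.2) := by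
      funext q
      have hq : q.val = (x1, q.val.2) := by
        have hq2 := q.prop
        simp only [mem_setOf_eq] at hq2
        exact Prod.ext hq2 rfl
      simp only [domRestrict, Function.comp_apply]
      rw [hq]
    rw [he]
    exact hF.comp (continuous_snd.comp continuous_subtype_val)
  · intro x
    show f0 (x, x) + ∑' m, fΔ m (x, x) = g x
    rw [hf03 x]
    have hts : ∀ m : ℕ, fΔ m (x, x) = h (n (m+1) x) x - h (n m x) x :=
      fun m => hΔ3 m x
    rw [tsum_congr hts]
    have hsble : Summable (fun m : ℕ => h (n (m+1) x) x - h (n m x) x) := by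
      apply Summable.of_norm_bounded csum
      intro m
      rw [Real.norm_eq_abs]
      have ht := abs_sub_le (h (n (m+1) x) x) (g x) (h (n m x) x)
      rw [abs_sub_comm (g x) (h (n m x) x)] at ht
      have e1 := hng (m+1) x
      have e2 := hng m x
      linarith
    have hT : Tendsto (fun M : ℕ => h (n M x) x) atTop (𝓝 (g x)) := by
      rw [tendsto_iff_dist_tendsto_zero]
      exact squeeze_zero (g := fun M : ℕ => (1/2:ℝ)^M) (fun M => dist_nonneg)
        (fun M => by rw [Real.dist_eq]; exact hng M x)
        (tendsto_pow_atTop_nhds_zero_of_lt_one (by norm_num) (by norm_num))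
    have hhs : HasSum (fun m : ℕ => h (n (m+1) x) x - h (n m x) x)
        (g x - h (n 0 x) x) := by
      rw [hsble.hasSum_iff_tendsto_nat]
      have heq : ∀ M : ℕ, (∑ m ∈ Finset.range M, (h (n (m+1) x) x - h (n m x) x))
          = h (n M x) x - h (n 0 x) x :=
        fun M => Finset.sum_range_sub (fun m => h (n m x) x) M
      simp only [heq]
      exact hT.sub_const _
    rw [hhs.tsum_eq]
    ring
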